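/- Bailey's second product formula: for x ∈ ℂ and ρ ∈ ℂ such that ρ and 2−ρ are not nonpositive integers, ₀F₁(−; ρ; x) · ₀F₁(−; 2−ρ; −x) = ₀F₃(−; 1/2, (ρ+1)/2, (3−ρ)/2; −x²/4) + (2(1−ρ)x/(ρ(2−ρ))) · ₀F₃(−; 3/2, ρ/2 + 1, 2 − ρ/2; −x²/4). -/

import Mathlib

open Filter Finset

noncomputable def poch (a : ℂ) (n : ℕ) : ℂ := (ascPochhammer ℂ n).eval a

lemma poch_zero (a : ℂ) : poch a 0 = 1 := by simp [poch]

lemma poch_succ (a : ℂ) (n : ℕ) : poch a (n + 1) = poch a n * (a + n) := by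
  simp [poch, ascPochhammer_succ_right]

lemma poch_ne_zero {a : ℂ} (ha : ∀ k : ℕ, a ≠ -(k : ℂ)) (n : ℕ) : poch a n ≠ 0 := by
  induction n with
  | zero => simp [poch_zero]
  | succ n ih =>
      rw [poch_succ]
      exact mul_ne_zero ih fun h => ha n (by linear_combination h)

lemma tendsto_norm_add_natCast (a : ℂ) :
    Tendsto (fun n : ℕ => ‖a + n‖) atTop atTop := by
  have h1 : Tendsto (fun n : ℕ => (n : ℝ) + -‖a‖) atTop atTop :=
    tendsto_atTop_add_const_right _ _ tendsto_natCast_atTop_atTop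
  refine tendsto_atTop_mono (fun n => ?_) h1
  calc (n : ℝ) + -‖a‖ = ‖((n : ℕ) : ℂ)‖ - ‖-a‖ := by
        rw [Complex.norm_natCast, norm_neg]; ring
    _ ≤ ‖((n : ℕ) : ℂ) - -a‖ := norm_sub_norm_le _ _
    _ = ‖a + n‖ := by rw [sub_neg_eq_add, add_comm]

lemma summable_norm_div (y : ℂ) (D : ℕ → ℂ) (hD : ∀ n, D n ≠ 0) (e : ℕ → ℂ)
    (hrec : ∀ n, D (n + 1) = D n * e n)
    (he : Tendsto (fun n => ‖e n‖) atTop atTop) :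
    Summable fun n => ‖y ^ n / D n‖ := by
  rcases eq_or_ne y 0 with rfl | hy
  · apply summable_of_ne_finset_zero (s := {0})
    intro n hn
    have hn0 : n ≠ 0 := by simpa using hn
    simp [zero_pow hn0]
  · have hfne : ∀ n, y ^ n / D n ≠ 0 := fun n => div_ne_zero (pow_ne_zero _ hy) (hD n)
    have key : ∀ n, ‖y ^ (n + 1) / D (n + 1)‖ / ‖y ^ n / D n‖ = ‖y‖ / ‖e n‖ := by
      intro n
      rw [hrec, pow_succ, mul_div_mul_comm, norm_mul, mul_div_cancel_left₀ _
        (norm_ne_zero_iff.2 (hfne n)), norm_div]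
    refine summable_of_ratio_test_tendsto_lt_one zero_lt_one
      (Eventually.of_forall fun n => norm_ne_zero_iff.2 (hfne n)) ?_
    have heq : (fun n => ‖‖y ^ (n + 1) / D (n + 1)‖‖ / ‖‖y ^ n / D n‖‖)
        = fun n => ‖y‖ / ‖e n‖ := funext fun n => by rw [norm_norm, norm_norm, key]
    rw [heq]
    exact Tendsto.div_atTop tendsto_const_nhds he

lemma summable_F1 {a : ℂ} (ha : ∀ k : ℕ, a ≠ -(k : ℂ)) (y : ℂ) :
    Summable fun n : ℕ => ‖y ^ n / (poch a n * n.factorial)‖ := by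
  apply summable_norm_div y _ (fun n => mul_ne_zero (poch_ne_zero ha n)
    (Nat.cast_ne_zero.2 n.factorial_ne_zero)) (fun n => (a + n) * ((n : ℂ) + 1))
  · intro n
    rw [poch_succ, Nat.factorial_succ]
    push_cast
    ring
  · have : (fun n : ℕ => ‖(a + n) * ((n : ℂ) + 1)‖)
        = fun n : ℕ => ‖a + n‖ * ‖(1 : ℂ) + n‖ := by
      funext n; rw [norm_mul, add_comm ((n : ℂ)) 1]
    rw [this]
    exact (tendsto_norm_add_natCast a).atTop_mul_atTop₀ (tendsto_norm_add_natCast 1)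

lemma summable_F3 {a b c : ℂ} (ha : ∀ k : ℕ, a ≠ -(k : ℂ)) (hb : ∀ k : ℕ, b ≠ -(k : ℂ))
    (hc : ∀ k : ℕ, c ≠ -(k : ℂ)) (y : ℂ) :
    Summable fun n : ℕ => y ^ n / (poch a n * poch b n * poch c n * n.factorial) := by
  refine Summable.of_norm (summable_norm_div y _ (fun n => ?_)
    (fun n => (a + n) * (b + n) * (c + n) * ((n : ℂ) + 1)) (fun n => ?_) ?_)
  · exact mul_ne_zero (mul_ne_zero (mul_ne_zero (poch_ne_zero ha n) (poch_ne_zero hb n))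
      (poch_ne_zero hc n)) (Nat.cast_ne_zero.2 n.factorial_ne_zero)
  · rw [poch_succ, poch_succ, poch_succ, Nat.factorial_succ]
    push_cast
    ring
  · have : (fun n : ℕ => ‖(a + n) * (b + n) * (c + n) * ((n : ℂ) + 1)‖)
        = fun n : ℕ => ‖a + n‖ * ‖b + n‖ * ‖c + n‖ * ‖(1 : ℂ) + n‖ := by
      funext n; rw [norm_mul, norm_mul, norm_mul, add_comm ((n : ℂ)) 1]
    rw [this]
    exact (((tendsto_norm_add_natCast a).atTop_mul_atTop₀
      (tendsto_norm_add_natCast b)).atTop_mul_atTop₀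
      (tendsto_norm_add_natCast c)).atTop_mul_atTop₀ (tendsto_norm_add_natCast 1)

namespace Bailey

noncomputable def A (ρ : ℂ) (m : ℕ) : ℂ := 1 / (poch ρ m * m.factorial)
noncomputable def B (ρ : ℂ) (n : ℕ) : ℂ := (-1) ^ n / (poch (2 - ρ) n * n.factorial)
noncomputable def CC (ρ : ℂ) (N : ℕ) : ℂ := ∑ m ∈ Finset.range (N + 1), A ρ m * B ρ (N - m)

noncomputable def Wc (ρ : ℂ) (N : ℕ) (z : ℂ) : ℂ :=
  2 * z ^ 2 + (2 * ρ - 2 * N - 8) * z - ((N : ℂ) + 3) * ρ - ((N : ℂ) + 2) ^ 2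
    + 4 * ((N : ℂ) + 2) + 1

noncomputable def Qc (ρ : ℂ) (N : ℕ) (z : ℂ) : ℂ :=
  ((N : ℂ) + 2) * ((N : ℂ) + 1) * ((N : ℂ) + 1 + ρ) * ((N : ℂ) + 3 - ρ)
    - 4 * z * ((N : ℂ) + 2 - z) * (z + ρ - 1) * ((N : ℂ) + 3 - z - ρ)

lemma A_rel {ρ : ℂ} (hρ : ∀ k : ℕ, ρ ≠ -(k : ℂ)) (m : ℕ) :
    A ρ (m + 1) * (((m : ℂ) + 1) * (ρ + m)) = A ρ m := by
  have h1 : poch ρ m ≠ 0 := poch_ne_zero hρ m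
  have h2 : (ρ + m) ≠ 0 := fun h => hρ m (by linear_combination h)
  have h3 : ((m.factorial : ℂ)) ≠ 0 := Nat.cast_ne_zero.2 m.factorial_ne_zero
  have h4 : ((m : ℂ) + 1) ≠ 0 := Nat.cast_add_one_ne_zero m
  rw [A, A, poch_succ, Nat.factorial_succ]
  push_cast
  field_simp

lemma B_rel {ρ : ℂ} (hρ' : ∀ k : ℕ, 2 - ρ ≠ -(k : ℂ)) (n : ℕ) :
    B ρ (n + 1) * (((n : ℂ) + 1) * ((n : ℂ) + 2 - ρ)) = -B ρ n := by
  have h1 : poch (2 - ρ) n ≠ 0 := poch_ne_zero hρ' n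
  have h2 : ((2 - ρ) + n) ≠ 0 := fun h => hρ' n (by linear_combination h)
  have h3 : ((n.factorial : ℂ)) ≠ 0 := Nat.cast_ne_zero.2 n.factorial_ne_zero
  have h4 : ((n : ℂ) + 1) ≠ 0 := Nat.cast_add_one_ne_zero n
  rw [B, B, poch_succ, Nat.factorial_succ, pow_succ]
  push_cast
  field_simp
  ring

lemma rec_CC {ρ : ℂ} (hρ : ∀ k : ℕ, ρ ≠ -(k : ℂ)) (hρ' : ∀ k : ℕ, 2 - ρ ≠ -(k : ℂ))
    (N : ℕ) :
    ((N : ℂ) + 2) * ((N : ℂ) + 1) * ((N : ℂ) + 1 + ρ) * ((N : ℂ) + 3 - ρ) * CC ρ (N + 2)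
      = -4 * CC ρ N := by
  classical
  set T : ℕ → ℂ := fun m =>
    if 1 ≤ m ∧ m ≤ N + 2 then A ρ (m - 1) * B ρ (N + 2 - m) * Wc ρ N m else 0 with hT
  have htel : ∀ m ∈ Finset.range (N + 3),
      A ρ m * B ρ (N + 2 - m) * Qc ρ N m = T (m + 1) - T m := by
    intro m hm
    rw [Finset.mem_range] at hm
    match m with
    | 0 =>
        have hB := B_rel hρ' (N + 1)
        have e1 : T 1 = A ρ 0 * B ρ (N + 1) * Wc ρ N 1 := by
          simp only [hT]
          rw [if_pos ⟨le_refl 1, by omega⟩]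
          norm_num
        have e0 : T 0 = 0 := by simp [hT]
        rw [e1, e0, sub_zero]
        simp only [Qc, Wc, Nat.sub_zero]
        push_cast at hB ⊢
        linear_combination (-(A ρ 0 * (2 * 1 + (2 * ρ - 2 * N - 8) * 1 - ((N : ℂ) + 3) * ρ
          - ((N : ℂ) + 2) ^ 2 + 4 * ((N : ℂ) + 2) + 1))) * hB
    | (k + 1) =>
        rcases eq_or_lt_of_le (by omega : k + 1 ≤ N + 2) with hk | hk
        · -- m = N + 2
          have hkN : k = N + 1 := by omega
          subst hkN
          have hA := A_rel hρ (N + 1)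
          have e1 : T (N + 3) = 0 := by
            simp only [hT]
            rw [if_neg (by omega)]
          have e2 : T (N + 2) = A ρ (N + 1) * B ρ 0 * Wc ρ N (N + 2) := by
            simp only [hT]
            rw [if_pos ⟨by omega, le_refl _⟩]
            norm_num
          have harg : N + 2 - (N + 2) = 0 := by omega
          rw [show (N + 1 + 1) = N + 2 from rfl, show (N + 2) + 1 = N + 3 from rfl,
            e1, e2, harg, zero_sub]
          simp only [Qc, Wc]
          push_cast at hA ⊢
          linear_combination (-(B ρ 0 * (2 * ((N : ℂ) + 2) ^ 2 + (2 * ρ - 2 * N - 8) * ((N : ℂ) + 2)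
            - ((N : ℂ) + 3) * ρ - ((N : ℂ) + 2) ^ 2 + 4 * ((N : ℂ) + 2) + 1))) * hA
        · -- 1 ≤ k+1 ≤ N+1
          have hkN : k ≤ N := by omega
          have hA := A_rel hρ k
          have hB := B_rel hρ' (N - k)
          have e1 : T (k + 2) = A ρ (k + 1) * B ρ (N - k) * Wc ρ N ((k : ℂ) + 2) := by
            simp only [hT]
            rw [if_pos ⟨by omega, by omega⟩, show k + 2 - 1 = k + 1 from rfl,
              show N + 2 - (k + 2) = N - k from by omega]
            norm_cast
          have e2 : T (k + 1) = A ρ k * B ρ ((N - k) + 1) * Wc ρ N ((k : ℂ) + 1) := by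
            simp only [hT]
            rw [if_pos ⟨by omega, by omega⟩, show k + 1 - 1 = k from rfl,
              show N + 2 - (k + 1) = (N - k) + 1 from by omega]
            norm_cast
          have harg : N + 2 - (k + 1) = (N - k) + 1 := by omega
          rw [show (k + 1) + 1 = k + 2 from rfl, e1, e2, harg]
          simp only [Qc, Wc]
          rw [Nat.cast_sub hkN] at hB
          push_cast at hA hB ⊢
          linear_combination (-(B ρ ((N - k) + 1) * (2 * ((k : ℂ) + 1) ^ 2
              + (2 * ρ - 2 * N - 8) * ((k : ℂ) + 1) - ((N : ℂ) + 3) * ρ - ((N : ℂ) + 2) ^ 2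
              + 4 * ((N : ℂ) + 2) + 1))) * hA
            - (A ρ (k + 1) * (2 * ((k : ℂ) + 2) ^ 2 + (2 * ρ - 2 * N - 8) * ((k : ℂ) + 2)
              - ((N : ℂ) + 3) * ρ - ((N : ℂ) + 2) ^ 2 + 4 * ((N : ℂ) + 2) + 1)) * hB
  have hsum : ∑ m ∈ Finset.range (N + 3), A ρ m * B ρ (N + 2 - m) * Qc ρ N m = 0 := by
    rw [Finset.sum_congr rfl htel, Finset.sum_range_sub T]
    have e1 : T (N + 3) = 0 := by simp only [hT]; rw [if_neg (by omega)]
    have e0 : T 0 = 0 := by simp [hT]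
    rw [e1, e0, sub_zero]
  have expand : ∀ m ∈ Finset.range (N + 3),
      A ρ m * B ρ (N + 2 - m) * Qc ρ N m
        = ((N : ℂ) + 2) * ((N : ℂ) + 1) * ((N : ℂ) + 1 + ρ) * ((N : ℂ) + 3 - ρ)
            * (A ρ m * B ρ (N + 2 - m))
          - A ρ m * B ρ (N + 2 - m)
            * (4 * (m : ℂ) * ((N : ℂ) + 2 - m) * ((m : ℂ) + ρ - 1) * ((N : ℂ) + 3 - m - ρ)) := by
    intro m _
    simp only [Qc]
    ring
  rw [Finset.sum_congr rfl expand, Finset.sum_sub_distrib, ← Finset.mul_sum] at hsum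
  have hF : ∑ m ∈ Finset.range (N + 3), A ρ m * B ρ (N + 2 - m)
        * (4 * (m : ℂ) * ((N : ℂ) + 2 - m) * ((m : ℂ) + ρ - 1) * ((N : ℂ) + 3 - m - ρ))
      = -4 * CC ρ N := by
    rw [show N + 3 = (N + 2) + 1 from rfl, Finset.sum_range_succ', Finset.sum_range_succ]
    have hF0 : A ρ 0 * B ρ (N + 2 - 0)
        * (4 * ((0 : ℕ) : ℂ) * ((N : ℂ) + 2 - (0 : ℕ)) * (((0 : ℕ) : ℂ) + ρ - 1)
          * ((N : ℂ) + 3 - (0 : ℕ) - ρ)) = 0 := by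
      push_cast
      ring
    have hFtop : A ρ (N + 1 + 1) * B ρ (N + 2 - (N + 1 + 1))
        * (4 * ((N + 1 + 1 : ℕ) : ℂ) * ((N : ℂ) + 2 - ((N + 1 + 1 : ℕ) : ℂ))
          * (((N + 1 + 1 : ℕ) : ℂ) + ρ - 1) * ((N : ℂ) + 3 - ((N + 1 + 1 : ℕ) : ℂ) - ρ)) = 0 := by
      push_cast
      ring
    rw [hF0, hFtop, add_zero, add_zero]
    have hstep : ∀ i ∈ Finset.range (N + 1), A ρ (i + 1) * B ρ (N + 2 - (i + 1))
        * (4 * ((i + 1 : ℕ) : ℂ) * ((N : ℂ) + 2 - ((i + 1 : ℕ) : ℂ))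
          * (((i + 1 : ℕ) : ℂ) + ρ - 1) * ((N : ℂ) + 3 - ((i + 1 : ℕ) : ℂ) - ρ))
        = -4 * (A ρ i * B ρ (N - i)) := by
      intro i hi
      rw [Finset.mem_range] at hi
      have hiN : i ≤ N := by omega
      have hA := A_rel hρ i
      have hB := B_rel hρ' (N - i)
      rw [Nat.cast_sub hiN] at hB
      rw [show N + 2 - (i + 1) = (N - i) + 1 from by omega]
      push_cast at hA hB ⊢
      linear_combination (-4 * B ρ (N - i)) * hA
        + (4 * A ρ (i + 1) * ((i : ℂ) + 1) * (ρ + i)) * hB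
    rw [Finset.sum_congr rfl hstep, ← Finset.mul_sum]
    rfl
  rw [show CC ρ (N + 2) = ∑ m ∈ Finset.range (N + 3), A ρ m * B ρ (N + 2 - m) from rfl]
  linear_combination hsum + hF


lemma half_ne : ∀ k : ℕ, (1 / 2 : ℂ) ≠ -(k : ℂ) := by
  intro k h
  have : ((2 * k + 1 : ℕ) : ℂ) = 0 := by push_cast; linear_combination 2 * h
  exact (by omega : 2 * k + 1 ≠ 0) (Nat.cast_eq_zero.mp this)

lemma threehalf_ne : ∀ k : ℕ, (3 / 2 : ℂ) ≠ -(k : ℂ) := by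
  intro k h
  have : ((2 * k + 3 : ℕ) : ℂ) = 0 := by push_cast; linear_combination 2 * h
  exact (by omega : 2 * k + 3 ≠ 0) (Nat.cast_eq_zero.mp this)

noncomputable def dE (ρ : ℂ) (M : ℕ) : ℂ :=
  (-1) ^ M / (4 ^ M * poch (1 / 2) M * poch ((ρ + 1) / 2) M * poch ((3 - ρ) / 2) M * M.factorial)

noncomputable def dO (ρ : ℂ) (M : ℕ) : ℂ :=
  (2 * (1 - ρ) / (ρ * (2 - ρ))) *
    ((-1) ^ M / (4 ^ M * poch (3 / 2) M * poch (ρ / 2 + 1) M * poch (2 - ρ / 2) M * M.factorial))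

lemma dE_rec {ρ : ℂ} (h1 : ∀ k : ℕ, (ρ + 1) / 2 ≠ -(k : ℂ))
    (h2 : ∀ k : ℕ, (3 - ρ) / 2 ≠ -(k : ℂ)) (M : ℕ) :
    (2 * (M : ℂ) + 2) * (2 * (M : ℂ) + 1) * (2 * (M : ℂ) + 1 + ρ) * (2 * (M : ℂ) + 3 - ρ)
      * dE ρ (M + 1) = -4 * dE ρ M := by
  have p1 : poch (1 / 2) M ≠ 0 := poch_ne_zero half_ne M
  have p2 : poch ((ρ + 1) / 2) M ≠ 0 := poch_ne_zero h1 M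
  have p3 : poch ((3 - ρ) / 2) M ≠ 0 := poch_ne_zero h2 M
  have q1 : (1 / 2 + (M : ℂ)) ≠ 0 := fun h => half_ne M (by linear_combination h)
  have q2 : ((ρ + 1) / 2 + (M : ℂ)) ≠ 0 := fun h => h1 M (by linear_combination h)
  have q3 : ((3 - ρ) / 2 + (M : ℂ)) ≠ 0 := fun h => h2 M (by linear_combination h)
  have q4 : ((M : ℂ) + 1) ≠ 0 := Nat.cast_add_one_ne_zero M
  have q5 : ((M.factorial : ℂ)) ≠ 0 := Nat.cast_ne_zero.2 M.factorial_ne_zero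
  have q6 : (4 : ℂ) ^ M ≠ 0 := pow_ne_zero _ (by norm_num)
  rw [dE, dE, poch_succ, poch_succ, poch_succ, Nat.factorial_succ]
  simp only [pow_succ]
  push_cast
  set P1 := poch (1 / 2) M
  set P2 := poch ((ρ + 1) / 2) M
  set P3 := poch ((3 - ρ) / 2) M
  rw [← mul_div_assoc, ← mul_div_assoc]
  rw [div_eq_div_iff (by apply_rules [mul_ne_zero] <;> norm_num)
    (by apply_rules [mul_ne_zero] <;> norm_num)]
  ring

lemma dO_rec {ρ : ℂ} (h3 : ∀ k : ℕ, ρ / 2 + 1 ≠ -(k : ℂ))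
    (h4 : ∀ k : ℕ, 2 - ρ / 2 ≠ -(k : ℂ)) (M : ℕ) :
    (2 * (M : ℂ) + 3) * (2 * (M : ℂ) + 2) * (2 * (M : ℂ) + 2 + ρ) * (2 * (M : ℂ) + 4 - ρ)
      * dO ρ (M + 1) = -4 * dO ρ M := by
  have p1 : poch (3 / 2) M ≠ 0 := poch_ne_zero threehalf_ne M
  have p2 : poch (ρ / 2 + 1) M ≠ 0 := poch_ne_zero h3 M
  have p3 : poch (2 - ρ / 2) M ≠ 0 := poch_ne_zero h4 M
  have q1 : (3 / 2 + (M : ℂ)) ≠ 0 := fun h => threehalf_ne M (by linear_combination h)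
  have q2 : (ρ / 2 + 1 + (M : ℂ)) ≠ 0 := fun h => h3 M (by linear_combination h)
  have q3 : (2 - ρ / 2 + (M : ℂ)) ≠ 0 := fun h => h4 M (by linear_combination h)
  have q4 : ((M : ℂ) + 1) ≠ 0 := Nat.cast_add_one_ne_zero M
  have q5 : ((M.factorial : ℂ)) ≠ 0 := Nat.cast_ne_zero.2 M.factorial_ne_zero
  have q6 : (4 : ℂ) ^ M ≠ 0 := pow_ne_zero _ (by norm_num)
  have key : (2 * (M : ℂ) + 3) * (2 * (M : ℂ) + 2) * (2 * (M : ℂ) + 2 + ρ)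
      * (2 * (M : ℂ) + 4 - ρ) * ((-1) ^ (M + 1) / (4 ^ (M + 1) * poch (3 / 2) (M + 1)
        * poch (ρ / 2 + 1) (M + 1) * poch (2 - ρ / 2) (M + 1) * (M + 1).factorial))
      = -4 * ((-1) ^ M / (4 ^ M * poch (3 / 2) M * poch (ρ / 2 + 1) M * poch (2 - ρ / 2) M
        * M.factorial)) := by
    rw [poch_succ, poch_succ, poch_succ, Nat.factorial_succ]
    simp only [pow_succ]
    push_cast
    set P1 := poch (3 / 2) M
    set P2 := poch (ρ / 2 + 1) M
    set P3 := poch (2 - ρ / 2) M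
    rw [← mul_div_assoc, ← mul_div_assoc]
    rw [div_eq_div_iff (by apply_rules [mul_ne_zero] <;> norm_num)
      (by apply_rules [mul_ne_zero] <;> norm_num)]
    ring
  rw [dO, dO]
  linear_combination (2 * (1 - ρ) / (ρ * (2 - ρ))) * key

lemma CE {ρ : ℂ} (hρ : ∀ k : ℕ, ρ ≠ -(k : ℂ)) (hρ' : ∀ k : ℕ, 2 - ρ ≠ -(k : ℂ))
    (h1 : ∀ k : ℕ, (ρ + 1) / 2 ≠ -(k : ℂ)) (h2 : ∀ k : ℕ, (3 - ρ) / 2 ≠ -(k : ℂ)) :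
    ∀ M : ℕ, CC ρ (2 * M) = dE ρ M := by
  intro M
  induction M with
  | zero =>
      rw [show 2 * 0 = 0 from rfl, CC, dE]
      simp [A, B, poch_zero]
  | succ M ih =>
      have hrec := rec_CC hρ hρ' (2 * M)
      push_cast at hrec
      have hd := dE_rec h1 h2 M
      have c1 : (2 * (M : ℂ) + 2) ≠ 0 := by
        intro h
        have : ((2 * M + 2 : ℕ) : ℂ) = 0 := by push_cast; linear_combination h
        exact (by omega : 2 * M + 2 ≠ 0) (Nat.cast_eq_zero.mp this)
      have c2 : (2 * (M : ℂ) + 1) ≠ 0 := by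
        intro h
        have : ((2 * M + 1 : ℕ) : ℂ) = 0 := by push_cast; linear_combination h
        exact (by omega : 2 * M + 1 ≠ 0) (Nat.cast_eq_zero.mp this)
      have c3 : (2 * (M : ℂ) + 1 + ρ) ≠ 0 := fun h =>
        hρ (2 * M + 1) (by push_cast; linear_combination h)
      have c4 : (2 * (M : ℂ) + 3 - ρ) ≠ 0 := fun h =>
        hρ' (2 * M + 1) (by push_cast; linear_combination h)
      have hc : (2 * (M : ℂ) + 2) * (2 * (M : ℂ) + 1) * (2 * (M : ℂ) + 1 + ρ)
          * (2 * (M : ℂ) + 3 - ρ) ≠ 0 :=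
        mul_ne_zero (mul_ne_zero (mul_ne_zero c1 c2) c3) c4
      have h0 : (2 * (M : ℂ) + 2) * (2 * (M : ℂ) + 1) * (2 * (M : ℂ) + 1 + ρ)
          * (2 * (M : ℂ) + 3 - ρ) * (CC ρ (2 * M + 2) - dE ρ (M + 1)) = 0 := by
        linear_combination hrec - hd - 4 * ih
      have := (mul_eq_zero.mp h0).resolve_left hc
      rw [show 2 * (M + 1) = 2 * M + 2 from by ring]
      exact sub_eq_zero.mp this
      
lemma CO {ρ : ℂ} (hρ : ∀ k : ℕ, ρ ≠ -(k : ℂ)) (hρ' : ∀ k : ℕ, 2 - ρ ≠ -(k : ℂ))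
    (h3 : ∀ k : ℕ, ρ / 2 + 1 ≠ -(k : ℂ)) (h4 : ∀ k : ℕ, 2 - ρ / 2 ≠ -(k : ℂ)) :
    ∀ M : ℕ, CC ρ (2 * M + 1) = dO ρ M := by
  intro M
  induction M with
  | zero =>
      have hr0 : ρ ≠ 0 := fun h => hρ 0 (by rw [h]; norm_num)
      have hr2 : (2 : ℂ) - ρ ≠ 0 := fun h => hρ' 0 (by rw [h]; norm_num)
      rw [show 2 * 0 + 1 = 1 from rfl, CC, dO]
      rw [Finset.sum_range_succ, Finset.sum_range_one]
      simp only [A, B, poch_zero, poch_succ, Nat.sub_zero, Nat.sub_self]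
      push_cast
      field_simp
      ring_nf
      field_simp
      ring
  | succ M ih =>
      have hrec := rec_CC hρ hρ' (2 * M + 1)
      push_cast at hrec
      have hd := dO_rec h3 h4 M
      have c1 : (2 * (M : ℂ) + 3) ≠ 0 := by
        intro h
        have : ((2 * M + 3 : ℕ) : ℂ) = 0 := by push_cast; linear_combination h
        exact (by omega : 2 * M + 3 ≠ 0) (Nat.cast_eq_zero.mp this)
      have c2 : (2 * (M : ℂ) + 2) ≠ 0 := by
        intro h
        have : ((2 * M + 2 : ℕ) : ℂ) = 0 := by push_cast; linear_combination h
        exact (by omega : 2 * M + 2 ≠ 0) (Nat.cast_eq_zero.mp this)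
      have c3 : (2 * (M : ℂ) + 2 + ρ) ≠ 0 := fun h =>
        hρ (2 * M + 2) (by push_cast; linear_combination h)
      have c4 : (2 * (M : ℂ) + 4 - ρ) ≠ 0 := fun h =>
        hρ' (2 * M + 2) (by push_cast; linear_combination h)
      have hc : (2 * (M : ℂ) + 3) * (2 * (M : ℂ) + 2) * (2 * (M : ℂ) + 2 + ρ)
          * (2 * (M : ℂ) + 4 - ρ) ≠ 0 :=
        mul_ne_zero (mul_ne_zero (mul_ne_zero c1 c2) c3) c4
      have h0 : (2 * (M : ℂ) + 3) * (2 * (M : ℂ) + 2) * (2 * (M : ℂ) + 2 + ρ)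
          * (2 * (M : ℂ) + 4 - ρ) * (CC ρ (2 * M + 1 + 2) - dO ρ (M + 1)) = 0 := by
        linear_combination hrec - hd - 4 * ih
      have := (mul_eq_zero.mp h0).resolve_left hc
      rw [show 2 * (M + 1) + 1 = 2 * M + 1 + 2 from by ring]
      exact sub_eq_zero.mp this

end Bailey


theorem stmt7 (ρ : ℂ) (hρ : ∀ k : ℕ, ρ ≠ -(k : ℂ)) (hρ' : ∀ k : ℕ, 2 - ρ ≠ -(k : ℂ))
    (h1 : ∀ k : ℕ, (ρ + 1) / 2 ≠ -(k : ℂ)) (h2 : ∀ k : ℕ, (3 - ρ) / 2 ≠ -(k : ℂ))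
    (h3 : ∀ k : ℕ, ρ / 2 + 1 ≠ -(k : ℂ)) (h4 : ∀ k : ℕ, 2 - ρ / 2 ≠ -(k : ℂ))
    (x : ℂ) :
    (∑' (m : ℕ), x ^ m / (poch ρ m * m.factorial)) *
      (∑' (n : ℕ), (-x) ^ n / (poch (2 - ρ) n * n.factorial))
      = (∑' (m : ℕ), (-x ^ 2 / 4) ^ m /
            (poch (1 / 2) m * poch ((ρ + 1) / 2) m * poch ((3 - ρ) / 2) m * m.factorial))
        + (2 * (1 - ρ) * x / (ρ * (2 - ρ))) *
          ∑' (m : ℕ), (-x ^ 2 / 4) ^ m /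
            (poch (3 / 2) m * poch (ρ / 2 + 1) m * poch (2 - ρ / 2) m * m.factorial) := by
  have hs1 := summable_F1 hρ x
  have hs2 := summable_F1 hρ' (-x)
  rw [tsum_mul_tsum_eq_tsum_sum_antidiagonal_of_summable_norm hs1 hs2]
  have hinner : ∀ N : ℕ, (∑ kl ∈ Finset.HasAntidiagonal.antidiagonal N,
      x ^ kl.1 / (poch ρ kl.1 * kl.1.factorial)
        * ((-x) ^ kl.2 / (poch (2 - ρ) kl.2 * kl.2.factorial)))
      = x ^ N * Bailey.CC ρ N := by
    intro N
    rw [Finset.Nat.sum_antidiagonal_eq_sum_range_succ_mk]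
    rw [show Bailey.CC ρ N = ∑ m ∈ Finset.range (N + 1), Bailey.A ρ m * Bailey.B ρ (N - m)
      from rfl, Finset.mul_sum]
    refine Finset.sum_congr rfl fun m hm => ?_
    rw [Finset.mem_range] at hm
    have hmN : m ≤ N := by omega
    rw [Bailey.A, Bailey.B, neg_pow,
      show x ^ N = x ^ m * x ^ (N - m) from by rw [← pow_add, Nat.add_sub_cancel' hmN]]
    ring
  rw [tsum_congr hinner]
  have hCE := Bailey.CE hρ hρ' h1 h2
  have hCO := Bailey.CO hρ hρ' h3 h4
  have hp : ∀ M : ℕ, (-x ^ 2 / 4 : ℂ) ^ M = (-1) ^ M * x ^ (2 * M) / 4 ^ M := by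
    intro M
    rw [show (-x ^ 2 / 4 : ℂ) = -1 * x ^ 2 / 4 from by ring, div_pow, mul_pow, ← pow_mul]
  have hE : ∀ M : ℕ, x ^ (2 * M) * Bailey.CC ρ (2 * M)
      = (-x ^ 2 / 4) ^ M /
          (poch (1 / 2) M * poch ((ρ + 1) / 2) M * poch ((3 - ρ) / 2) M * M.factorial) := by
    intro M
    rw [hCE M, Bailey.dE, hp M]
    ring
  have hO : ∀ M : ℕ, x ^ (2 * M + 1) * Bailey.CC ρ (2 * M + 1)
      = (2 * (1 - ρ) * x / (ρ * (2 - ρ))) * ((-x ^ 2 / 4) ^ M /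
          (poch (3 / 2) M * poch (ρ / 2 + 1) M * poch (2 - ρ / 2) M * M.factorial)) := by
    intro M
    rw [hCO M, Bailey.dO, hp M]
    ring
  have hSE : Summable fun M : ℕ => x ^ (2 * M) * Bailey.CC ρ (2 * M) :=
    (summable_F3 Bailey.half_ne h1 h2 (-x ^ 2 / 4)).congr fun M => (hE M).symm
  have hSO : Summable fun M : ℕ => x ^ (2 * M + 1) * Bailey.CC ρ (2 * M + 1) :=
    ((summable_F3 Bailey.threehalf_ne h3 h4 (-x ^ 2 / 4)).mul_left
      (2 * (1 - ρ) * x / (ρ * (2 - ρ)))).congr fun M => (hO M).symm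
  rw [← tsum_even_add_odd (f := fun n => x ^ n * Bailey.CC ρ n) hSE hSO]
  rw [tsum_congr hE, tsum_congr hO, tsum_mul_left]
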